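/- Let L/K be an extension of number fields and π ∈ L a Weil q-number (q a power of a prime p). Assume π is p-potentially in K, i.e., for every p-adic valuation v of K and any two extensions v₁, v₂ of v to L one has v₁(π) = v₂(π). Then π^k ∈ K, where k is the order of the group of roots of unity in a Galois closure of L. -/

import Mathlib

open NumberField IsDedekindDomain

/-- The exponent of the prime `w` in the ideal generated by `x`:
the `w`-adic order of `x`. -/
noncomputable def padicOrd {M : Type*} [Field M] [NumberField M]
    (w : HeightOneSpectrum (𝓞 M)) (x : 𝓞 M) : ℕ := by
  classical
  exact (Associates.mk w.asIdeal).count (Associates.mk (Ideal.span {x} : Ideal (𝓞 M))).factors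

/-- The `w`-adic valuation of `x`, normalized so that the valuation of `p` is `1`. -/
noncomputable def normVal {M : Type*} [Field M] [NumberField M]
    (w : HeightOneSpectrum (𝓞 M)) (p : ℕ) (x : 𝓞 M) : ℚ :=
  (padicOrd w x : ℚ) / (padicOrd w (p : 𝓞 M) : ℚ)

section CountLemmas
open scoped Classical
variable {R S : Type*} [CommRing R] [IsDedekindDomain R] [CommRing S] [IsDedekindDomain S]

/-- count of the prime `v` in the factorization of the ideal `I` -/
noncomputable def idCnt (v : HeightOneSpectrum R) (I : Ideal R) : ℕ :=
  (Associates.mk v.asIdeal).count (Associates.mk I).factors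

lemma idCnt_mul (v : HeightOneSpectrum R) {I J : Ideal R} (hI : I ≠ ⊥) (hJ : J ≠ ⊥) :
    idCnt v (I * J) = idCnt v I + idCnt v J := by
  unfold idCnt
  rw [← Associates.mk_mul_mk, Associates.count_mul (Associates.mk_ne_zero.2 hI)
    (Associates.mk_ne_zero.2 hJ) v.associates_irreducible]

lemma idCnt_top (v : HeightOneSpectrum R) : idCnt v (⊤ : Ideal R) = 0 := by
  unfold idCnt
  rw [← Ideal.one_eq_top, Associates.mk_one, Associates.factors_one,
    Associates.count_zero v.associates_irreducible]

lemma idCnt_eq_zero_of_not_le (v : HeightOneSpectrum R) {I : Ideal R} (hI : I ≠ ⊥)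
    (h : ¬ I ≤ v.asIdeal) : idCnt v I = 0 := by
  by_contra hc
  exact h (Ideal.le_of_dvd ((Associates.count_ne_zero_iff_dvd hI v.irreducible).1 hc))

lemma idCnt_self (v : HeightOneSpectrum R) : idCnt v v.asIdeal = 1 := by
  unfold idCnt
  exact Associates.count_self v.associates_irreducible

lemma idCnt_ne_zero_iff_mem (v : HeightOneSpectrum R) {x : R} (hx : x ≠ 0) :
    idCnt v (Ideal.span {x}) ≠ 0 ↔ x ∈ v.asIdeal := by
  unfold idCnt
  rw [Associates.count_ne_zero_iff_dvd (by simpa using hx) v.irreducible,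
    Ideal.dvd_span_singleton]

lemma idCnt_map_engine (f : R →+* S) (hmap : ∀ I : Ideal R, I ≠ ⊥ → Ideal.map f I ≠ ⊥)
    (W : HeightOneSpectrum S) (w : HeightOneSpectrum R) (e : ℕ)
    (hbase : idCnt W (Ideal.map f w.asIdeal) = e)
    (hvan : ∀ v : HeightOneSpectrum R, v ≠ w → idCnt W (Ideal.map f v.asIdeal) = 0)
    (I : Ideal R) (hI : I ≠ ⊥) :
    idCnt W (Ideal.map f I) = e * idCnt w I := by
  refine UniqueFactorizationMonoid.induction_on_prime (P := fun I : Ideal R =>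
      I ≠ ⊥ → idCnt W (Ideal.map f I) = e * idCnt w I) I (fun h => absurd rfl h) ?_ ?_ hI
  · intro J hJ _
    rw [Ideal.isUnit_iff] at hJ
    subst hJ
    rw [Ideal.map_top, idCnt_top, idCnt_top, mul_zero]
  · intro J P hJ hP ih _
    have hPb : P ≠ ⊥ := hP.ne_zero
    have hPp : P.IsPrime := Ideal.isPrime_of_prime hP
    set v : HeightOneSpectrum R := ⟨P, hPp, hPb⟩ with hv
    have hPv : P = v.asIdeal := rfl
    have hstep : idCnt W (Ideal.map f P) = e * idCnt w P := by
      by_cases hvw : v = w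
      · rw [hPv, hvw, hbase, idCnt_self, mul_one]
      · rw [hPv, hvan v hvw]
        rw [idCnt_eq_zero_of_not_le w (hPv ▸ hPb) ?_, mul_zero]
        intro hle
        exact hvw (HeightOneSpectrum.ext (((Ideal.IsPrime.isMaximal hPp hPb).eq_of_le
          w.isPrime.ne_top hle)))
    rw [Ideal.map_mul, idCnt_mul W (hmap P hPb) (hmap J hJ),
      idCnt_mul w hPb hJ, hstep, ih hJ, mul_add]

omit [IsDedekindDomain R] [IsDedekindDomain S] in
lemma map_ne_bot_of_inj {f : R →+* S} (hf : Function.Injective f) {I : Ideal R} (hI : I ≠ ⊥) :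
    Ideal.map f I ≠ ⊥ := by
  obtain ⟨x, hxI, hx0⟩ := Submodule.exists_mem_ne_zero_of_ne_bot hI
  intro h
  have : f x ∈ Ideal.map f I := Ideal.mem_map_of_mem f hxI
  rw [h, Ideal.mem_bot] at this
  exact hx0 (hf (by simpa using this))

lemma idCnt_map_algebraMap (f : R →+* S) (hf : Function.Injective f)
    (W : HeightOneSpectrum S) (w : HeightOneSpectrum R)
    (hcom : W.asIdeal.comap f = w.asIdeal) (I : Ideal R) (hI : I ≠ ⊥) :
    idCnt W (Ideal.map f I) =
      @Ideal.ramificationIdx' _ _ _ _ f.toAlgebra w.asIdeal W.asIdeal * idCnt w I := by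
  refine idCnt_map_engine f (fun J hJ => map_ne_bot_of_inj hf hJ) W w _ ?_ ?_ I hI
  · letI := f.toAlgebra
    rw [idCnt, count_associates_factors_eq (map_ne_bot_of_inj hf w.ne_bot) W.isPrime W.ne_bot,
      Ideal.IsDedekindDomain.ramificationIdx'_eq_normalizedFactors_count
        (map_ne_bot_of_inj hf w.ne_bot) W.isPrime W.ne_bot]
    rfl
  · intro v hvw
    refine idCnt_eq_zero_of_not_le W (map_ne_bot_of_inj hf v.ne_bot) fun hle => hvw ?_
    rw [Ideal.map_le_iff_le_comap, hcom] at hle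
    exact HeightOneSpectrum.ext ((Ideal.IsPrime.isMaximal v.isPrime v.ne_bot).eq_of_le
      w.isPrime.ne_top hle)

lemma idCnt_map_equiv (e : R ≃+* S) (W : HeightOneSpectrum S)
    (w : HeightOneSpectrum R) (hcom : W.asIdeal.comap (e : R →+* S) = w.asIdeal)
    (I : Ideal R) (hI : I ≠ ⊥) :
    idCnt W (Ideal.map (e : R →+* S) I) = idCnt w I := by
  have h1 : idCnt W (Ideal.map (e : R →+* S) I) = 1 * idCnt w I := by
    refine idCnt_map_engine _ (fun J hJ => map_ne_bot_of_inj e.injective hJ) W w 1 ?_ ?_ I hI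
    · rw [← hcom, show Ideal.map (e : R →+* S) (Ideal.comap (e : R →+* S) W.asIdeal) = W.asIdeal
        from Ideal.map_comap_of_surjective _ e.surjective _, idCnt_self]
    · intro v hvw
      refine idCnt_eq_zero_of_not_le W (map_ne_bot_of_inj e.injective v.ne_bot) fun hle => hvw ?_
      rw [Ideal.map_le_iff_le_comap, hcom] at hle
      exact HeightOneSpectrum.ext ((Ideal.IsPrime.isMaximal v.isPrime v.ne_bot).eq_of_le
        w.isPrime.ne_top hle)
  simpa using h1
end CountLemmas

open scoped Classical in
lemma padicOrd_eq {M : Type*} [Field M] [NumberField M]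
    (w : HeightOneSpectrum (𝓞 M)) (x : 𝓞 M) : padicOrd w x = idCnt w (Ideal.span {x}) := rfl

/-- Let `L/K` be an extension of number fields and `π ∈ L` a Weil
`q`-number (`q` a power of a prime `p`). Assume `π` is `p`-potentially in `K`, i.e. for
every `p`-adic valuation `v` of `K` and any two extensions `w₁, w₂` of `v` to `L` one has
`w₁(π) = w₂(π)`. Then `π ^ k ∈ K`, where `k` is the order of the group of roots of unity
in a Galois closure of `L`. -/
theorem stmt2 (p n q : ℕ) (hp : p.Prime) (hn : 0 < n) (hq : q = p ^ n)
    (K L : Type*) [Field K] [NumberField K] [Field L] [NumberField L] [Algebra K L]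
    (Lt : Type*) [Field Lt] [NumberField Lt] [Algebra L Lt] [IsScalarTower ℚ L Lt]
    [IsGalois ℚ Lt] (hLt : IntermediateField.normalClosure ℚ L Lt = ⊤)
    (π : 𝓞 L)
    (habs : ∀ σ : L →+* ℂ, ‖σ (π : L)‖ = Real.sqrt q)
    (hpot : ∀ w₁ w₂ : HeightOneSpectrum (𝓞 L),
      (p : 𝓞 L) ∈ w₁.asIdeal → (p : 𝓞 L) ∈ w₂.asIdeal →
      w₁.asIdeal.comap (algebraMap (𝓞 K) (𝓞 L)) =
        w₂.asIdeal.comap (algebraMap (𝓞 K) (𝓞 L)) →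
      normVal w₁ p π = normVal w₂ p π) :
    (π : L) ^ (NumberField.Units.torsionOrder Lt : ℕ) ∈ (algebraMap K L).range := by
  classical
  letI : Algebra K Lt := ((algebraMap L Lt).comp (algebraMap K L)).toAlgebra
  haveI : IsScalarTower K L Lt := IsScalarTower.of_algebraMap_eq' rfl
  haveI : IsScalarTower ℚ K Lt := IsScalarTower.of_algebraMap_eq' (Subsingleton.elim _ _)
  haveI : Normal K Lt := Normal.tower_top_of_normal ℚ K Lt
  haveI : IsGalois K Lt := ⟨⟩
  set k := (NumberField.Units.torsionOrder Lt : ℕ) with hk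
  -- basic positivity facts
  have hq2 : 2 ≤ q := hq ▸ le_trans hp.two_le (Nat.le_self_pow hn.ne' p)
  have hqR : (0:ℝ) < (q:ℝ) := by positivity
  have hsq : Real.sqrt q ≠ 0 := by positivity
  -- `π` is nonzero
  have hπ0 : π ≠ 0 := by
    intro h
    have := habs (IsAlgClosed.lift (M := ℂ) (R := ℚ) : L →ₐ[ℚ] ℂ).toRingHom
    rw [h] at this
    simp only [RingOfIntegers.coe_eq_algebraMap, map_zero, norm_zero] at this
    exact hsq this.symm
  set f : 𝓞 L →+* 𝓞 Lt := algebraMap (𝓞 L) (𝓞 Lt) with hf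
  have hfx : ∀ x : 𝓞 L, ((f x : 𝓞 Lt) : Lt) = algebraMap L Lt (x : L) := fun _ => rfl
  have hfinj : Function.Injective f := by
    intro a b h
    have : ((f a : 𝓞 Lt) : Lt) = ((f b : 𝓞 Lt) : Lt) := by rw [h]
    rw [hfx, hfx] at this
    exact RingOfIntegers.ext ((algebraMap L Lt).injective this)
  set PiT : 𝓞 Lt := f π with hPT
  have hPT0 : PiT ≠ 0 := fun h => hπ0 (hfinj (by rw [← hPT, h, map_zero]))
  have hpL0 : (p : 𝓞 L) ≠ 0 := Nat.cast_ne_zero.mpr hp.ne_zero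
  have hpLt0 : (p : 𝓞 Lt) ≠ 0 := Nat.cast_ne_zero.mpr hp.ne_zero
  -- divisibility of `PiT` by a power of `p`
  set D := Fintype.card (Lt →ₐ[ℚ] ℂ) with hD
  have hdvd : PiT ∣ (p : 𝓞 Lt) ^ (n * D) := by
    have h1 := RingOfIntegers.dvd_norm ℚ PiT
    set N := RingOfIntegers.norm ℚ PiT with hN
    have hnorm : algebraMap ℚ ℂ ((N : ℚ)) = ∏ φ : Lt →ₐ[ℚ] ℂ, φ (PiT : Lt) := by
      rw [hN, RingOfIntegers.coe_norm]
      exact Algebra.norm_eq_prod_embeddings ℚ ℂ _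
    have habs' : ∀ φ : Lt →ₐ[ℚ] ℂ, ‖φ (PiT : Lt)‖ = Real.sqrt q := by
      intro φ
      rw [hfx]
      exact habs (φ.toRingHom.comp (algebraMap L Lt))
    have hnn : ‖algebraMap ℚ ℂ ((N : ℚ))‖ = Real.sqrt q ^ D := by
      rw [hnorm, norm_prod]
      simp only [habs']
      rw [Finset.prod_const, Finset.card_univ]
    have hcast : ‖algebraMap ℚ ℂ ((N : ℚ))‖ = |((N : ℚ) : ℝ)| := by
      rw [show algebraMap ℚ ℂ ((N : ℚ)) = ((((N : ℚ) : ℝ)) : ℂ) by push_cast; rfl]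
      exact Complex.norm_real _
    have hsqr : (((N : ℚ) : ℝ)) ^ 2 = ((q : ℝ)) ^ D := by
      rw [← sq_abs, ← hcast, hnn, ← pow_mul, mul_comm D 2, pow_mul, Real.sq_sqrt hqR.le]
    have hsqQ : (N : ℚ) ^ 2 = (q : ℚ) ^ D := by
      have : (((N : ℚ) ^ 2 : ℚ) : ℝ) = (((q : ℚ) ^ D : ℚ) : ℝ) := by push_cast; exact_mod_cast hsqr
      exact_mod_cast this
    have hN2 : N * N = (p : 𝓞 ℚ) ^ (n * D) := by
      refine RingOfIntegers.ext ?_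
      push_cast
      rw [← sq, hsqQ, hq]
      push_cast
      rw [← pow_mul, mul_comm n D]
    have h2 : N ∣ (p : 𝓞 ℚ) ^ (n * D) := by
      rw [← hN2]
      exact dvd_mul_right N N
    refine h1.trans ?_
    have := map_dvd (algebraMap (𝓞 ℚ) (𝓞 Lt)) h2
    rwa [map_pow, map_natCast] at this
  -- the key fixed-point property
  have hfix : ∀ σ : Lt ≃ₐ[K] Lt,
      σ ((algebraMap L Lt (π : L)) ^ k) = (algebraMap L Lt (π : L)) ^ k := by
    intro σ
    set σ₀ : 𝓞 Lt ≃+* 𝓞 Lt := RingOfIntegers.mapRingEquiv σ with hσ₀def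
    have hσ₀ : ∀ x : 𝓞 Lt, ((σ₀ x : 𝓞 Lt) : Lt) = σ (x : Lt) := fun _ => rfl
    -- counts agree at every prime of Lt
    have hcnt : ∀ W : HeightOneSpectrum (𝓞 Lt),
        idCnt W (Ideal.span {σ₀ PiT}) = idCnt W (Ideal.span {PiT}) := by
      intro W
      have hWσ_prime : (W.asIdeal.comap (σ₀ : 𝓞 Lt →+* 𝓞 Lt)).IsPrime :=
        W.isPrime.comap _
      have hWσ_ne : W.asIdeal.comap (σ₀ : 𝓞 Lt →+* 𝓞 Lt) ≠ ⊥ := by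
        intro h
        apply W.ne_bot
        rw [eq_bot_iff]
        intro x hx
        have h2 : σ₀.symm x ∈ W.asIdeal.comap (σ₀ : 𝓞 Lt →+* 𝓞 Lt) := by
          rw [Ideal.mem_comap]
          simpa [σ₀.apply_symm_apply] using hx
        rw [h, Ideal.mem_bot] at h2
        rw [Ideal.mem_bot, ← σ₀.apply_symm_apply x, h2, map_zero]
      set Wσ : HeightOneSpectrum (𝓞 Lt) := ⟨_, hWσ_prime, hWσ_ne⟩ with hWσ
      have h1 : idCnt W (Ideal.span {σ₀ PiT}) = idCnt Wσ (Ideal.span {PiT}) := by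
        rw [show Ideal.span {σ₀ PiT} = Ideal.map (σ₀ : 𝓞 Lt →+* 𝓞 Lt) (Ideal.span {PiT}) by
          rw [Ideal.map_span, Set.image_singleton]; rfl]
        exact idCnt_map_equiv σ₀ W Wσ rfl _ (by simpa using hPT0)
      have hPp : idCnt Wσ (Ideal.span {(p : 𝓞 Lt)}) = idCnt W (Ideal.span {(p : 𝓞 Lt)}) := by
        have h2 := idCnt_map_equiv σ₀ W Wσ rfl (Ideal.span {(p : 𝓞 Lt)}) (by simpa using hpLt0)
        rw [Ideal.map_span, Set.image_singleton, map_natCast] at h2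
        exact h2.symm
      by_cases hmem : (p : 𝓞 Lt) ∈ W.asIdeal
      · -- primes over p : use the potential hypothesis
        have hw₁ne : W.asIdeal.comap f ≠ ⊥ :=
          Ideal.IsIntegral.comap_ne_bot (𝓞 L) W.ne_bot
        have hw₂ne : Wσ.asIdeal.comap f ≠ ⊥ :=
          Ideal.IsIntegral.comap_ne_bot (𝓞 L) Wσ.ne_bot
        set w₁ : HeightOneSpectrum (𝓞 L) := ⟨_, W.isPrime.comap f, hw₁ne⟩ with hw₁
        set w₂ : HeightOneSpectrum (𝓞 L) := ⟨_, Wσ.isPrime.comap f, hw₂ne⟩ with hw₂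
        set e₁ := @Ideal.ramificationIdx' _ _ _ _ f.toAlgebra w₁.asIdeal W.asIdeal with he₁
        set e₂ := @Ideal.ramificationIdx' _ _ _ _ f.toAlgebra w₂.asIdeal Wσ.asIdeal with he₂
        have hc₁ : ∀ x : 𝓞 L, x ≠ 0 → idCnt W (Ideal.span {f x}) = e₁ * padicOrd w₁ x := by
          intro x hx
          rw [padicOrd_eq, ← Set.image_singleton, ← Ideal.map_span]
          exact idCnt_map_algebraMap f hfinj W w₁ rfl _ (by simpa using hx)
        have hc₂ : ∀ x : 𝓞 L, x ≠ 0 → idCnt Wσ (Ideal.span {f x}) = e₂ * padicOrd w₂ x := by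
          intro x hx
          rw [padicOrd_eq, ← Set.image_singleton, ← Ideal.map_span]
          exact idCnt_map_algebraMap f hfinj Wσ w₂ rfl _ (by simpa using hx)
        have hfp : f (p : 𝓞 L) = (p : 𝓞 Lt) := map_natCast f p
        have hdenom : e₂ * padicOrd w₂ (p : 𝓞 L) = e₁ * padicOrd w₁ (p : 𝓞 L) := by
          rw [← hc₂ (p : 𝓞 L) hpL0, ← hc₁ (p : 𝓞 L) hpL0, hfp, hPp]
        have hWp0 : idCnt W (Ideal.span {(p : 𝓞 Lt)}) ≠ 0 :=
          (idCnt_ne_zero_iff_mem W hpLt0).2 hmem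
        have hd1pos : padicOrd w₁ (p : 𝓞 L) ≠ 0 := by
          intro h
          apply hWp0
          rw [← hfp, hc₁ (p : 𝓞 L) hpL0, h, mul_zero]
        have hd2pos : padicOrd w₂ (p : 𝓞 L) ≠ 0 := by
          intro h
          apply hWp0
          rw [← hPp, ← hfp, hc₂ (p : 𝓞 L) hpL0, h, mul_zero]
        have hm₁ : (p : 𝓞 L) ∈ w₁.asIdeal := by
          have h' := hd1pos
          rw [padicOrd_eq] at h'
          exact (idCnt_ne_zero_iff_mem w₁ hpL0).1 h'
        have hm₂ : (p : 𝓞 L) ∈ w₂.asIdeal := by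
          have h' := hd2pos
          rw [padicOrd_eq] at h'
          exact (idCnt_ne_zero_iff_mem w₂ hpL0).1 h'
        have hcom : w₁.asIdeal.comap (algebraMap (𝓞 K) (𝓞 L)) =
            w₂.asIdeal.comap (algebraMap (𝓞 K) (𝓞 L)) := by
          have hring : (σ₀ : 𝓞 Lt →+* 𝓞 Lt).comp (f.comp (algebraMap (𝓞 K) (𝓞 L))) =
              f.comp (algebraMap (𝓞 K) (𝓞 L)) := by
            ext c
            show σ (algebraMap L Lt (algebraMap K L (c : K))) =
              algebraMap L Lt (algebraMap K L (c : K))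
            exact σ.commutes (c : K)
          show (W.asIdeal.comap f).comap (algebraMap (𝓞 K) (𝓞 L)) =
            ((W.asIdeal.comap (σ₀ : 𝓞 Lt →+* 𝓞 Lt)).comap f).comap (algebraMap (𝓞 K) (𝓞 L))
          rw [Ideal.comap_comap, Ideal.comap_comap, Ideal.comap_comap, hring]
        have hval := hpot w₁ w₂ hm₁ hm₂ hcom
        unfold normVal at hval
        have hcross : padicOrd w₁ π * padicOrd w₂ (p : 𝓞 L) =
            padicOrd w₂ π * padicOrd w₁ (p : 𝓞 L) := by
          have h' := (div_eq_div_iff (by exact_mod_cast hd1pos : (padicOrd w₁ (p : 𝓞 L) : ℚ) ≠ 0)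
            (by exact_mod_cast hd2pos : (padicOrd w₂ (p : 𝓞 L) : ℚ) ≠ 0)).1 hval
          exact_mod_cast h'
        have key : e₂ * padicOrd w₂ π = e₁ * padicOrd w₁ π := by
          have hmain : (e₂ * padicOrd w₂ π) * (padicOrd w₁ (p : 𝓞 L) * padicOrd w₂ (p : 𝓞 L)) =
              (e₁ * padicOrd w₁ π) * (padicOrd w₁ (p : 𝓞 L) * padicOrd w₂ (p : 𝓞 L)) := by
            calc (e₂ * padicOrd w₂ π) * (padicOrd w₁ (p : 𝓞 L) * padicOrd w₂ (p : 𝓞 L))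
                = (e₂ * padicOrd w₂ (p : 𝓞 L)) * (padicOrd w₂ π * padicOrd w₁ (p : 𝓞 L)) := by
                  ring
            _ = (e₁ * padicOrd w₁ (p : 𝓞 L)) * (padicOrd w₁ π * padicOrd w₂ (p : 𝓞 L)) := by
                  rw [hdenom, ← hcross]
            _ = (e₁ * padicOrd w₁ π) * (padicOrd w₁ (p : 𝓞 L) * padicOrd w₂ (p : 𝓞 L)) := by
                  ring
          exact Nat.eq_of_mul_eq_mul_right (Nat.pos_of_ne_zero
            (mul_ne_zero hd1pos hd2pos)) hmain
        rw [h1, hPT, hc₂ π hπ0, hc₁ π hπ0, key]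
      · -- primes away from p : both counts vanish
        have hgen : ∀ y : 𝓞 Lt, y ≠ 0 → y ∣ (p : 𝓞 Lt) ^ (n * D) →
            idCnt W (Ideal.span {y}) = 0 := by
          intro y hy hyd
          by_contra h
          have hyW : y ∈ W.asIdeal := (idCnt_ne_zero_iff_mem W hy).1 h
          obtain ⟨c, hc⟩ := hyd
          have : (p : 𝓞 Lt) ^ (n * D) ∈ W.asIdeal := by
            rw [hc]
            exact Ideal.mul_mem_right _ _ hyW
          exact hmem (W.isPrime.mem_of_pow_mem _ this)
        have hσdvd : σ₀ PiT ∣ (p : 𝓞 Lt) ^ (n * D) := by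
          have := map_dvd (σ₀ : 𝓞 Lt →+* 𝓞 Lt) hdvd
          rwa [map_pow, map_natCast] at this
        rw [hgen PiT hPT0 hdvd, hgen (σ₀ PiT) (fun h => hPT0 (by
          simpa using congrArg σ₀.symm h)) hσdvd]
    -- the two ideals agree, so the elements are associated
    have hspan : Ideal.span {σ₀ PiT} = Ideal.span {PiT} := by
      have hσPiT0 : σ₀ PiT ≠ 0 := fun h => hPT0 (by simpa using congrArg σ₀.symm h)
      have hmk : Associates.mk (Ideal.span {σ₀ PiT}) = Associates.mk (Ideal.span {PiT}) := by
        refine Associates.eq_of_eq_counts ?_ ?_ ?_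
        · exact Associates.mk_ne_zero.2 (by simpa using hσPiT0)
        · exact Associates.mk_ne_zero.2 (by simpa using hPT0)
        · intro pA hpA
          obtain ⟨J, rfl⟩ := Associates.mk_surjective pA
          have hJirr : Irreducible J := Associates.irreducible_mk.1 hpA
          have hJprime : Prime J := UniqueFactorizationMonoid.irreducible_iff_prime.1 hJirr
          exact hcnt ⟨J, Ideal.isPrime_of_prime hJprime, hJprime.ne_zero⟩
      exact associated_iff_eq.1 (Associates.mk_eq_mk_iff_associated.1 hmk)
    obtain ⟨u, hu⟩ := Ideal.span_singleton_eq_span_singleton.mp hspan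
    -- the unit u is a root of unity
    have hunorm : ∀ φ : Lt →+* ℂ, ‖φ ((u : 𝓞 Lt) : Lt)‖ = 1 := by
      intro φ
      have heq : ((σ₀ PiT : 𝓞 Lt) : Lt) * ((u : 𝓞 Lt) : Lt) = ((PiT : 𝓞 Lt) : Lt) := by
        exact_mod_cast congrArg (fun z : 𝓞 Lt => (z : Lt)) hu
      have h1 : ‖φ ((σ₀ PiT : 𝓞 Lt) : Lt)‖ = Real.sqrt q := by
        rw [hσ₀, hfx]
        exact habs ((φ.comp (σ : Lt ≃+* Lt).toRingHom).comp (algebraMap L Lt))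
      have h2 : ‖φ ((PiT : 𝓞 Lt) : Lt)‖ = Real.sqrt q := by
        rw [hfx]
        exact habs (φ.comp (algebraMap L Lt))
      have h3 : ‖φ ((σ₀ PiT : 𝓞 Lt) : Lt)‖ * ‖φ ((u : 𝓞 Lt) : Lt)‖ = ‖φ ((PiT : 𝓞 Lt) : Lt)‖ := by
        rw [← norm_mul, ← map_mul, heq]
      rw [h1, h2] at h3
      field_simp at h3
      exact h3
    have humem : u ∈ NumberField.Units.torsion Lt := by
      rw [NumberField.Units.mem_torsion]
      intro w
      rw [← NumberField.InfinitePlace.norm_embedding_eq]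
      exact hunorm (NumberField.InfinitePlace.embedding w)
    have hukU : u ^ k = 1 := by
      have ht : (⟨u, humem⟩ : NumberField.Units.torsion Lt) ^ k = 1 := by
        rw [hk]
        exact pow_card_eq_one'
      have := congrArg (Subtype.val) ht
      simpa using this
    have huk : (u : 𝓞 Lt) ^ k = 1 := by
      have := congrArg (Units.val) hukU
      simpa using this
    have hOeq : σ₀ (PiT ^ k) = PiT ^ k := by
      rw [map_pow]
      calc (σ₀ PiT) ^ k = (σ₀ PiT) ^ k * (u : 𝓞 Lt) ^ k := by rw [huk, mul_one]
      _ = (σ₀ PiT * (u : 𝓞 Lt)) ^ k := (mul_pow _ _ _).symm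
      _ = PiT ^ k := by rw [hu]
    have := congrArg (fun z : 𝓞 Lt => (z : Lt)) hOeq
    simp only [map_pow, SubmonoidClass.coe_pow] at this
    calc σ ((algebraMap L Lt (π : L)) ^ k) = σ (((PiT : 𝓞 Lt) : Lt) ^ k) := by rw [hfx]
    _ = (σ ((PiT : 𝓞 Lt) : Lt)) ^ k := map_pow σ _ k
    _ = ((σ₀ PiT : 𝓞 Lt) : Lt) ^ k := by rw [hσ₀]
    _ = ((PiT : 𝓞 Lt) : Lt) ^ k := by exact_mod_cast this
    _ = (algebraMap L Lt (π : L)) ^ k := by rw [hfx]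
  -- conclude by Galois descent
  have hbot : IntermediateField.fixedField (⊤ : Subgroup (Lt ≃ₐ[K] Lt)) = ⊥ := by
    rw [← IntermediateField.fixingSubgroup_bot (F := K) (E := Lt)]
    exact IsGalois.fixedField_fixingSubgroup ⊥
  have hmem : (algebraMap L Lt (π : L)) ^ k ∈ (⊥ : IntermediateField K Lt) := by
    rw [← hbot]
    exact fun g => hfix g.1
  rw [IntermediateField.mem_bot] at hmem
  obtain ⟨c, hc⟩ := hmem
  refine ⟨c, (algebraMap L Lt).injective ?_⟩
  rw [map_pow, ← hc, ← IsScalarTower.algebraMap_apply]
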